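/- arXiv:1907.04228 — 7 statements merged into one kernel-verified Lean document; each statement's English description precedes it below -/
import Mathlib

section
/- Let n̄ > 0 be a real number and define t_k = n̄^k/(1+n̄)^{k+1} for k ∈ ℕ. Then ∑_{k=0}^∞ (k+1)²·t_{k+1}² · ∫₀¹ (s·t_k + (1−s))⁻² ds = n̄²·(1+2n̄)/(1+n̄). -/
open intervalIntegral in
lemma integral_inv_sq_comb {a : ℝ} (ha : 0 < a) :
    ∫ s in (0:ℝ)..1, ((s * a + (1 - s)) ^ 2)⁻¹ = a⁻¹ := by
  have hd : ∀ s ∈ Set.uIcc (0:ℝ) 1, 0 < s * a + (1 - s) := by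
    intro s hs
    rw [Set.uIcc_of_le (by norm_num)] at hs
    obtain ⟨hs0, hs1⟩ := hs
    rcases lt_or_eq_of_le hs1 with h | h
    · have : 0 ≤ s * a := mul_nonneg hs0 ha.le
      linarith
    · subst h; simpa using ha
  have key : ∀ s ∈ Set.uIcc (0:ℝ) 1,
      HasDerivAt (fun u => u / (u * a + (1 - u))) (((s * a + (1 - s)) ^ 2)⁻¹) s := by
    intro s hs
    have hne : s * a + (1 - s) ≠ 0 := (hd s hs).ne'
    have h1 : HasDerivAt (fun u : ℝ => u * a + (1 - u)) (a - 1) s := by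
      have := ((hasDerivAt_id s).mul_const a).add
        ((hasDerivAt_const s (1:ℝ)).sub (hasDerivAt_id s))
      exact this.congr_deriv (by ring)
    have := (hasDerivAt_id s).div h1 hne
    refine this.congr_deriv ?_
    simp only [id_eq]
    field_simp
    ring
  have hcont : ContinuousOn (fun s : ℝ => ((s * a + (1 - s)) ^ 2)⁻¹) (Set.uIcc 0 1) := by
    apply ContinuousOn.inv₀
    · fun_prop
    · intro s hs
      exact pow_ne_zero _ (hd s hs).ne'
  rw [integral_eq_sub_of_hasDerivAt key (hcont.intervalIntegrable)]
  simp [one_div, ha.ne']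

lemma hasSum_sq_geom {x : ℝ} (hx : |x| < 1) :
    HasSum (fun k : ℕ => ((k : ℝ) + 1) ^ 2 * x ^ k)
      (2 / (1 - x) ^ 3 - 1 / (1 - x) ^ 2) := by
  have hx' : ‖x‖ < 1 := by simpa using hx
  have h2 := (hasSum_choose_mul_geometric_of_norm_lt_one 2 hx').mul_left 2
  have h1 := hasSum_choose_mul_geometric_of_norm_lt_one 1 hx'
  have := h2.sub h1
  convert this using 2 with k
  · rfl
  have h2c : (((k + 2).choose 2 : ℕ) : ℝ) = ((k : ℝ) + 2) * ((k : ℝ) + 1) / 2 := by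
    rw [Nat.cast_choose_two]; push_cast; ring
  rw [Nat.choose_one_right]
  push_cast
  rw [h2c]
  ring
  norm_num [div_eq_mul_inv]

/-- Scalar content of `Tr[â ρ̂₀ â† ∫₀¹ ds σ̂₀⁻¹(s) â ρ̂₀ â† σ̂₀⁻¹(s)]` for a thermal
state with Fock eigenvalues `t_k = n̄^k/(1+n̄)^{k+1}`. -/
theorem qpsk_trace_series_one (n : ℝ) (hn : 0 < n)
    (t : ℕ → ℝ) (ht : ∀ k, t k = n ^ k / (1 + n) ^ (k + 1)) :
    ∑' k : ℕ, ((k : ℝ) + 1) ^ 2 * t (k + 1) ^ 2 *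
        ∫ s in (0:ℝ)..1, ((s * t k + (1 - s)) ^ 2)⁻¹ =
      n ^ 2 * (1 + 2 * n) / (1 + n) := by
  have h1n : (0:ℝ) < 1 + n := by linarith
  have htpos : ∀ k, 0 < t k := by
    intro k; rw [ht k]; positivity
  set x : ℝ := n / (1 + n) with hxdef
  have hx : |x| < 1 := by
    rw [abs_of_pos (by positivity)]
    rw [div_lt_one h1n]; linarith
  have hterm : ∀ k : ℕ, ((k : ℝ) + 1) ^ 2 * t (k + 1) ^ 2 *
      ∫ s in (0:ℝ)..1, ((s * t k + (1 - s)) ^ 2)⁻¹ =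
      (((k : ℝ) + 1) ^ 2 * x ^ k) * (n ^ 2 / (1 + n) ^ 3) := by
    intro k
    rw [integral_inv_sq_comb (htpos k), ht, ht, hxdef, div_pow]
    rw [inv_div, div_pow n (1 + n) k]
    field_simp
    ring
  rw [tsum_congr hterm, tsum_mul_right, (hasSum_sq_geom hx).tsum_eq]
  rw [hxdef]
  have hx1 : 1 - n / (1 + n) = 1 / (1 + n) := by field_simp; ring
  rw [hx1]
  field_simp
  ring
end

section
/- Let n̄ > 0 be a real number and define t_k = n̄^k/(1+n̄)^{k+1} for k ∈ ℕ. Then ∑_{k=0}^∞ (k+1)²·t_k·t_{k+1}² · ∫₀¹ s·(s·t_k + (1−s))⁻³ ds = n̄²·(1+2n̄)/(2·(1+n̄)). -/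
private lemma qpsk_integral_aux {t : ℝ} (ht0 : 0 < t) (ht1 : t < 1) :
    ∫ s in (0:ℝ)..1, s * ((s * t + (1 - s)) ^ 3)⁻¹ = (2 * t ^ 2)⁻¹ := by
  have htne : t - 1 ≠ 0 := by linarith
  have htz : t ≠ 0 := ne_of_gt ht0
  set F : ℝ → ℝ := fun s => ((t - 1) ^ 2)⁻¹ * ((2 * (s * t + (1 - s)) ^ 2)⁻¹ - (s * t + (1 - s))⁻¹)
    with hF
  have hgpos : ∀ s ∈ Set.uIcc (0:ℝ) 1, 0 < s * t + (1 - s) := by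
    intro s hs
    rw [Set.uIcc_of_le (by norm_num)] at hs
    obtain ⟨hs0, hs1⟩ := hs
    nlinarith
  have hderiv : ∀ s ∈ Set.uIcc (0:ℝ) 1, HasDerivAt F (s * ((s * t + (1 - s)) ^ 3)⁻¹) s := by
    intro s hs
    have hg : HasDerivAt (fun s : ℝ => s * t + (1 - s)) (t - 1) s := by
      have := ((hasDerivAt_id s).mul_const t).add ((hasDerivAt_const s (1:ℝ)).sub (hasDerivAt_id s))
      refine this.congr_deriv ?_
      ring
    have hgz : s * t + (1 - s) ≠ 0 := ne_of_gt (hgpos s hs)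
    have h1 : HasDerivAt (fun s : ℝ => (2 * (s * t + (1 - s)) ^ 2)⁻¹)
        (-(2 * (2 * (s * t + (1 - s)) ^ 1 * (t - 1))) / (2 * (s * t + (1 - s)) ^ 2) ^ 2) s := by
      exact ((hg.pow 2).const_mul 2).inv (mul_ne_zero two_ne_zero (pow_ne_zero 2 hgz))
    have h2 : HasDerivAt (fun s : ℝ => (s * t + (1 - s))⁻¹)
        (-(t - 1) / (s * t + (1 - s)) ^ 2) s := hg.inv hgz
    have := ((h1.sub h2).const_mul (((t - 1) ^ 2)⁻¹))
    refine this.congr_deriv ?_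
    field_simp
    ring
  have hint : IntervalIntegrable (fun s : ℝ => s * ((s * t + (1 - s)) ^ 3)⁻¹)
      MeasureTheory.volume 0 1 := by
    apply ContinuousOn.intervalIntegrable
    apply ContinuousOn.mul continuousOn_id
    apply ContinuousOn.inv₀ (by fun_prop)
    intro s hs
    exact pow_ne_zero 3 (ne_of_gt (hgpos s hs))
  have := intervalIntegral.integral_eq_sub_of_hasDerivAt hderiv hint
  rw [this, hF]
  have h1n : (1:ℝ) * t + (1 - 1) = t := by ring
  field_simp
  ring

/-- Scalar content of `Tr[ρ̂₀ ∫₀¹ s ds σ̂₀⁻¹(s) â ρ̂₀ â† σ̂₀⁻¹(s) â ρ̂₀ â† σ̂₀⁻¹(s)]`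
for a thermal state with Fock eigenvalues `t_k = n̄^k/(1+n̄)^{k+1}`. -/
theorem qpsk_trace_series_two (n : ℝ) (hn : 0 < n)
    (t : ℕ → ℝ) (ht : ∀ k, t k = n ^ k / (1 + n) ^ (k + 1)) :
    ∑' k : ℕ, ((k : ℝ) + 1) ^ 2 * t k * t (k + 1) ^ 2 *
        ∫ s in (0:ℝ)..1, s * ((s * t k + (1 - s)) ^ 3)⁻¹ =
      n ^ 2 * (1 + 2 * n) / (2 * (1 + n)) := by
  have h1n : (0:ℝ) < 1 + n := by linarith
  have h1nz : (1:ℝ) + n ≠ 0 := ne_of_gt h1n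
  set x : ℝ := n / (1 + n) with hx
  have hx0 : 0 < x := div_pos hn h1n
  have hx1 : x < 1 := by
    rw [hx, div_lt_one h1n]; linarith
  -- each t k is in (0,1)
  have htpos : ∀ k, 0 < t k := by
    intro k; rw [ht k]; positivity
  have htlt : ∀ k, t k < 1 := by
    intro k
    rw [ht k, div_lt_one (by positivity)]
    calc n ^ k ≤ (1 + n) ^ k := pow_le_pow_left₀ (le_of_lt hn) (by linarith) k
      _ < (1 + n) ^ (k + 1) := by
          apply pow_lt_pow_right₀ (by linarith) (by omega)
  -- evaluate the integrals
  have hterm : ∀ k : ℕ, ((k : ℝ) + 1) ^ 2 * t k * t (k + 1) ^ 2 *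
      ∫ s in (0:ℝ)..1, s * ((s * t k + (1 - s)) ^ 3)⁻¹ =
      (((k : ℝ) + 1) ^ 2 * x ^ k) * (n ^ 2 / (2 * (1 + n) ^ 3)) := by
    intro k
    rw [qpsk_integral_aux (htpos k) (htlt k), ht k, ht (k + 1), hx, div_pow]
    have hnz : n ≠ 0 := ne_of_gt hn
    simp only [div_pow]
    field_simp
    ring
  rw [tsum_congr hterm, tsum_mul_right]
  -- the power series ∑ (k+1)^2 x^k
  have hxn : ‖x‖ < 1 := by rw [Real.norm_eq_abs, abs_of_pos hx0]; exact hx1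
  have h2 := hasSum_choose_mul_geometric_of_norm_lt_one 2 hxn
  have h1 := hasSum_choose_mul_geometric_of_norm_lt_one 1 hxn
  have hsum : HasSum (fun k : ℕ => ((k : ℝ) + 1) ^ 2 * x ^ k)
      (2 * (1 / (1 - x) ^ 3) - 1 / (1 - x) ^ 2) := by
    have := (h2.mul_left 2).sub h1
    convert this using 2 with k
    · rfl
    have hch : (2 : ℕ) * (k + 2).choose 2 = (k + 1) * (k + 2) := by
      rw [Nat.choose_two_right, show k + 2 - 1 = k + 1 from rfl,
        show (k + 2) * (k + 1) = (k + 1) * (k + 2) from Nat.mul_comm _ _,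
        Nat.mul_div_cancel' (Nat.even_mul_succ_self (k + 1)).two_dvd]
    have hch' : (2 : ℝ) * ((k + 2).choose 2 : ℝ) = ((k : ℝ) + 1) * ((k : ℝ) + 2) := by
      exact_mod_cast congrArg (Nat.cast : ℕ → ℝ) hch
    rw [Nat.choose_one_right]
    push_cast
    nlinarith [hch', pow_pos hx0 k]
  rw [hsum.tsum_eq, hx]
  have hxne : (1:ℝ) - n / (1 + n) ≠ 0 := by
    rw [sub_ne_zero]
    intro h
    rw [eq_div_iff h1nz] at h
    linarith
  field_simp
  ring
end

section
/- Let n̄ > 0 be a real number and define t_k = n̄^k/(1+n̄)^{k+1} for k ∈ ℕ. Then ∑_{k=0}^∞ (k+1)·(k+2)·t_k·t_{k+2} · ∫₀¹ (s·t_k + (1−s))⁻² ds = 2n̄². -/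
open intervalIntegral in
lemma integral_aux {t : ℝ} (ht0 : 0 < t) (ht1 : t < 1) :
    ∫ s in (0:ℝ)..1, ((s * t + (1 - s)) ^ 2)⁻¹ = t⁻¹ := by
  have h1t : (1:ℝ) - t ≠ 0 := by linarith
  have hpos : ∀ s ∈ Set.uIcc (0:ℝ) 1, 0 < s * t + (1 - s) := by
    intro s hs
    rw [Set.uIcc_of_le (by norm_num)] at hs
    obtain ⟨h0, h1⟩ := hs
    nlinarith [mul_nonneg h0 (sub_nonneg.2 ht1.le)]
  have hderiv : ∀ s ∈ Set.uIcc (0:ℝ) 1,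
      HasDerivAt (fun s : ℝ => (1 - t)⁻¹ * (s * t + (1 - s))⁻¹)
        (((s * t + (1 - s)) ^ 2)⁻¹) s := by
    intro s hs
    have hne : s * t + (1 - s) ≠ 0 := (hpos s hs).ne'
    have hne2 : (s * t + (1 - s)) ^ 2 ≠ 0 := pow_ne_zero _ hne
    have hg : HasDerivAt (fun s : ℝ => s * t + (1 - s)) (t - 1) s := by
      exact (((hasDerivAt_id' s).mul_const t).add
        ((hasDerivAt_const s (1:ℝ)).sub (hasDerivAt_id' s))).congr_deriv (by ring)
    have := (hg.inv hne).const_mul (1 - t)⁻¹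
    refine this.congr_deriv ?_
    rw [neg_sub]
    field_simp
  have hcont : IntervalIntegrable (fun s : ℝ => ((s * t + (1 - s)) ^ 2)⁻¹)
      MeasureTheory.volume 0 1 := by
    apply ContinuousOn.intervalIntegrable
    apply ContinuousOn.inv₀
    · fun_prop
    · intro s hs
      exact pow_ne_zero _ (hpos s hs).ne'
  rw [integral_eq_sub_of_hasDerivAt hderiv hcont]
  norm_num
  field_simp

/-- Scalar content of `Tr[ρ̂₀ ∫₀¹ ds σ̂₀⁻¹(s) â² ρ̂₀ (â†)² σ̂₀⁻¹(s)]` for a thermal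
state with Fock eigenvalues `t_k = n̄^k/(1+n̄)^{k+1}`. -/
theorem qpsk_trace_series_three (n : ℝ) (hn : 0 < n)
    (t : ℕ → ℝ) (ht : ∀ k, t k = n ^ k / (1 + n) ^ (k + 1)) :
    ∑' k : ℕ, ((k : ℝ) + 1) * ((k : ℝ) + 2) * t k * t (k + 2) *
        ∫ s in (0:ℝ)..1, ((s * t k + (1 - s)) ^ 2)⁻¹ =
      2 * n ^ 2 := by
  have h1n : (0:ℝ) < 1 + n := by linarith
  set x : ℝ := n / (1 + n) with hxdef
  have hx : ‖x‖ < 1 := by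
    rw [Real.norm_eq_abs, abs_of_pos (div_pos hn h1n)]
    rw [div_lt_one h1n]; linarith
  have key : ∀ k : ℕ, ((k : ℝ) + 1) * ((k : ℝ) + 2) * t k * t (k + 2) *
        ∫ s in (0:ℝ)..1, ((s * t k + (1 - s)) ^ 2)⁻¹
      = (2 * (n ^ 2 / (1 + n) ^ 3)) * (((k + 2).choose 2 : ℝ) * x ^ k) := by
    intro k
    have htk : 0 < t k := by rw [ht k]; positivity
    have htk1 : t k < 1 := by
      rw [ht k, div_lt_one (by positivity), pow_succ]
      have h1 : n ^ k ≤ (1 + n) ^ k := pow_le_pow_left₀ hn.le (by linarith) k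
      nlinarith [pow_pos h1n k]
    rw [integral_aux htk htk1, ht, ht]
    have hch : (((k + 2).choose 2 : ℕ) : ℝ) = ((k:ℝ) + 2) * ((k:ℝ) + 1) / 2 := by
      rw [Nat.cast_choose_two]; push_cast; ring
    rw [hch, hxdef, div_pow]
    field_simp
    ring
  rw [tsum_congr key, tsum_mul_left, tsum_choose_mul_geometric_of_norm_lt_one 2 hx]
  have h1x : 1 - x = 1 / (1 + n) := by rw [hxdef]; field_simp; ring
  rw [h1x]
  field_simp
  rw [one_div, inv_pow]
  field_simp
end

section
/- Let n̄ > 0 be a real number and define t_k = n̄^k/(1+n̄)^{k+1} for k ∈ ℕ. Then for every natural number k ≥ 2, t_k · ∫₀¹ (s·t_k + (1−s))⁻¹·(s·t_{k−2} + (1−s))⁻¹ ds = (2n̄²/(1+2n̄))·log(1 + 1/n̄), where log is the natural logarithm; in particular the value is independent of k. -/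
/-- Scalar content of Eq. (66): for `k ≥ 2`,
`t_k ∫₀¹ (s t_k + (1−s))⁻¹ (s t_{k−2} + (1−s))⁻¹ ds = (2n̄²/(1+2n̄)) log(1+1/n̄)`,
independent of `k`. -/
theorem bpsk_offdiag_integral (n : ℝ) (hn : 0 < n)
    (t : ℕ → ℝ) (ht : ∀ k, t k = n ^ k / (1 + n) ^ (k + 1))
    (k : ℕ) (hk : 2 ≤ k) :
    t k * ∫ s in (0:ℝ)..1, (s * t k + (1 - s))⁻¹ * (s * t (k - 2) + (1 - s))⁻¹ =
      (2 * n ^ 2 / (1 + 2 * n)) * Real.log (1 + 1 / n) := by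
  obtain ⟨m, rfl⟩ : ∃ m, k = m + 2 := ⟨k - 2, by omega⟩
  have hk2 : m + 2 - 2 = m := by omega
  set a := t (m + 2) with hadef
  set b := t m with hbdef
  have hn1 : (0:ℝ) < 1 + n := by linarith
  have hn' : n ≠ 0 := ne_of_gt hn
  have hn1' : (1:ℝ) + n ≠ 0 := ne_of_gt hn1
  have h2n : (0:ℝ) < 1 + 2 * n := by linarith
  have ha : 0 < a := by
    rw [hadef, ht]; positivity
  have hb : 0 < b := by
    rw [hbdef, ht]; positivity
  have hab_eq : a - b = -a * (1 + 2 * n) / n ^ 2 := by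
    rw [hadef, hbdef, ht, ht]
    field_simp
    ring
  have hab : a - b ≠ 0 := by
    rw [hab_eq]
    have : -a * (1 + 2 * n) < 0 := by nlinarith
    exact div_ne_zero (ne_of_lt this) (by positivity)
  -- positivity of the denominators on [0,1]
  have hpos : ∀ (c : ℝ), 0 < c → ∀ s ∈ Set.Icc (0:ℝ) 1, 0 < s * c + (1 - s) := by
    intro c hc s hs
    rcases eq_or_lt_of_le hs.2 with h | h
    · rw [h]; simpa using hc
    · have := mul_nonneg hs.1 hc.le
      linarith
  -- antiderivative
  set F : ℝ → ℝ := fun s => (Real.log (s * a + (1 - s)) - Real.log (s * b + (1 - s))) / (a - b)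
    with hF
  have hderiv : ∀ s ∈ Set.uIcc (0:ℝ) 1,
      HasDerivAt F ((s * a + (1 - s))⁻¹ * (s * b + (1 - s))⁻¹) s := by
    intro s hs
    rw [Set.uIcc_of_le (by norm_num : (0:ℝ) ≤ 1)] at hs
    have hg1 : 0 < s * a + (1 - s) := hpos a ha s hs
    have hg2 : 0 < s * b + (1 - s) := hpos b hb s hs
    have d1 : HasDerivAt (fun x : ℝ => x * a + (1 - x)) (a - 1) s := by
      have := ((hasDerivAt_id s).mul_const a).add ((hasDerivAt_const s 1).sub (hasDerivAt_id s))
      exact this.congr_deriv (by ring)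
    have d2 : HasDerivAt (fun x : ℝ => x * b + (1 - x)) (b - 1) s := by
      have := ((hasDerivAt_id s).mul_const b).add ((hasDerivAt_const s 1).sub (hasDerivAt_id s))
      exact this.congr_deriv (by ring)
    have D := ((d1.log hg1.ne').sub (d2.log hg2.ne')).div_const (a - b)
    refine D.congr_deriv ?_
    set X := s * a + (1 - s) with hXdef
    set Y := s * b + (1 - s) with hYdef
    have key : (a - 1) * Y - X * (b - 1) = a - b := by rw [hXdef, hYdef]; ring
    rw [div_sub_div _ _ hg1.ne' hg2.ne', key, div_div,
      div_eq_iff (mul_ne_zero (mul_ne_zero hg1.ne' hg2.ne') hab)]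
    field_simp
  have hInt : IntervalIntegrable
      (fun s => (s * a + (1 - s))⁻¹ * (s * b + (1 - s))⁻¹) MeasureTheory.volume 0 1 := by
    apply ContinuousOn.intervalIntegrable
    rw [Set.uIcc_of_le (by norm_num : (0:ℝ) ≤ 1)]
    apply ContinuousOn.mul
    · exact ContinuousOn.inv₀ (by fun_prop)
        (fun s hs => (hpos a ha s hs).ne')
    · exact ContinuousOn.inv₀ (by fun_prop)
        (fun s hs => (hpos b hb s hs).ne')
  have hint_eq : ∫ s in (0:ℝ)..1, (s * a + (1 - s))⁻¹ * (s * b + (1 - s))⁻¹ = F 1 - F 0 :=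
    intervalIntegral.integral_eq_sub_of_hasDerivAt hderiv hInt
  have hF0 : F 0 = 0 := by simp [hF]
  have hF1 : F 1 = (Real.log a - Real.log b) / (a - b) := by
    simp [hF]
  -- log computation
  have hlog : Real.log a - Real.log b = -2 * Real.log (1 + 1 / n) := by
    have h1 : (1:ℝ) + 1 / n = (1 + n) / n := by field_simp; ring
    have hla : Real.log a = (m + 2 : ℕ) * Real.log n - (m + 3 : ℕ) * Real.log (1 + n) := by
      rw [hadef, ht, Real.log_div (pow_ne_zero _ hn') (pow_ne_zero _ hn1'),
        Real.log_pow, Real.log_pow]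
    have hlb : Real.log b = (m : ℕ) * Real.log n - (m + 1 : ℕ) * Real.log (1 + n) := by
      rw [hbdef, ht, Real.log_div (pow_ne_zero _ hn') (pow_ne_zero _ hn1'),
        Real.log_pow, Real.log_pow]
    rw [hla, hlb, h1, Real.log_div hn1' hn']
    push_cast
    ring
  rw [hk2, ← hbdef, hint_eq, hF0, hF1, hlog, hab_eq]
  field_simp
  ring
end

section
/- Let n̄ > 0 be a real number and define t_k = n̄^k/(1+n̄)^{k+1} for k ∈ ℕ. Then for every natural number k, t_{k+2}² · ∫₀¹ s·(s·t_k + (1−s))⁻²·(s·t_{k+2} + (1−s))⁻¹ ds = (2n̄⁴/(1+2n̄)²)·log(1 + 1/n̄) − n̄⁴/((1+n̄)²·(1+2n̄)), where log is the natural logarithm; in particular the value is independent of k. -/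
set_option maxHeartbeats 1600000


/-- Scalar content of Eq. (74): for every `k`,
`t_{k+2}² ∫₀¹ s (s t_k + (1−s))⁻² (s t_{k+2} + (1−s))⁻¹ ds
  = (2n̄⁴/(1+2n̄)²) log(1+1/n̄) − n̄⁴/((1+n̄)²(1+2n̄))`, independent of `k`. -/
theorem bpsk_second_integral (n : ℝ) (hn : 0 < n)
    (t : ℕ → ℝ) (ht : ∀ k, t k = n ^ k / (1 + n) ^ (k + 1))
    (k : ℕ) :
    t (k + 2) ^ 2 *
        ∫ s in (0:ℝ)..1, s * ((s * t k + (1 - s)) ^ 2)⁻¹ * (s * t (k + 2) + (1 - s))⁻¹ =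
      (2 * n ^ 4 / (1 + 2 * n) ^ 2) * Real.log (1 + 1 / n) -
        n ^ 4 / ((1 + n) ^ 2 * (1 + 2 * n)) := by
  have hn1 : (0:ℝ) < 1 + n := by linarith
  set a := t k with hadef
  set b := t (k+2) with hbdef
  have ha : a = n ^ k / (1 + n) ^ (k + 1) := ht k
  have hb : b = n ^ (k+2) / (1 + n) ^ (k + 2 + 1) := ht (k+2)
  have hapos : 0 < a := by rw [ha]; positivity
  have halt1 : a < 1 := by
    rw [ha, div_lt_one (by positivity)]
    have h1 : n ^ k ≤ (1+n)^k := pow_le_pow_left₀ hn.le (by linarith) k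
    have h2 : (1+n)^(k+1) = (1+n)^k * (1+n) := by ring
    nlinarith [pow_pos hn1 k]
  have hba : b = a * (n^2/(1+n)^2) := by
    rw [ha, hb]
    field_simp
    ring
  have hbpos : 0 < b := by rw [hba]; positivity
  have hblta : b < a := by
    rw [hba]
    have h : n^2/(1+n)^2 < 1 := by
      rw [div_lt_one (by positivity)]; nlinarith
    nlinarith
  have hbane : b - a ≠ 0 := by
    have : b - a < 0 := by linarith
    exact this.ne
  have ha1 : a - 1 ≠ 0 := by
    have : a - 1 < 0 := by linarith
    exact this.ne
  have hane : a ≠ 0 := hapos.ne'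
  have hn2 : (1 + 2*n) ≠ 0 := by positivity
  -- positivity of denominators on [0,1]
  have hupos : ∀ s ∈ Set.uIcc (0:ℝ) 1, 0 < s * a + (1 - s) := by
    intro s hs
    rw [Set.uIcc_of_le (by norm_num)] at hs
    obtain ⟨hs0, hs1⟩ := hs
    nlinarith
  have hvpos : ∀ s ∈ Set.uIcc (0:ℝ) 1, 0 < s * b + (1 - s) := by
    intro s hs
    rw [Set.uIcc_of_le (by norm_num)] at hs
    obtain ⟨hs0, hs1⟩ := hs
    nlinarith
  set c : ℝ := ((b-a)^2)⁻¹ with hc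
  set d : ℝ := ((a-1)*(b-a))⁻¹ with hd
  set F : ℝ → ℝ := fun s => c * (Real.log (s * a + (1 - s)) - Real.log (s * b + (1 - s)))
      - d * (s * a + (1 - s))⁻¹ with hF
  have hu : ∀ s : ℝ, HasDerivAt (fun s : ℝ => s * a + (1 - s)) (a - 1) s := by
    intro s
    have := ((hasDerivAt_id s).mul_const a).add ((hasDerivAt_const s (1:ℝ)).sub (hasDerivAt_id s))
    exact this.congr_deriv (by ring)
  have hv : ∀ s : ℝ, HasDerivAt (fun s : ℝ => s * b + (1 - s)) (b - 1) s := by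
    intro s
    have := ((hasDerivAt_id s).mul_const b).add ((hasDerivAt_const s (1:ℝ)).sub (hasDerivAt_id s))
    exact this.congr_deriv (by ring)
  have hderiv : ∀ s ∈ Set.uIcc (0:ℝ) 1,
      HasDerivAt F (s * ((s * a + (1 - s)) ^ 2)⁻¹ * (s * b + (1 - s))⁻¹) s := by
    intro s hs
    have hus := (hupos s hs).ne'
    have hvs := (hvpos s hs).ne'
    have h1 : HasDerivAt (fun s : ℝ => Real.log (s * a + (1 - s))) ((a-1) / (s * a + (1 - s))) s :=
      (hu s).log hus
    have h2 : HasDerivAt (fun s : ℝ => Real.log (s * b + (1 - s))) ((b-1) / (s * b + (1 - s))) s :=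
      (hv s).log hvs
    have h3 : HasDerivAt (fun s : ℝ => (s * a + (1 - s))⁻¹)
        (-(a-1) / (s * a + (1 - s))^2) s := (hu s).inv hus
    have hFd := ((h1.sub h2).const_mul c).sub (h3.const_mul d)
    refine hFd.congr_deriv ?_
    symm
    rw [hc, hd]
    field_simp
    ring
  have hcont : ContinuousOn
      (fun s : ℝ => s * ((s * a + (1 - s)) ^ 2)⁻¹ * (s * b + (1 - s))⁻¹) (Set.uIcc (0:ℝ) 1) := by
    apply ContinuousOn.mul
    · apply ContinuousOn.mul continuousOn_id
      exact ((by continuity : Continuous (fun s : ℝ => (s * a + (1 - s))^2)).continuousOn).inv₀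
        (fun s hs => pow_ne_zero 2 (hupos s hs).ne')
    · exact ((by continuity : Continuous (fun s : ℝ => s * b + (1 - s))).continuousOn).inv₀
        (fun s hs => (hvpos s hs).ne')
  have hint := intervalIntegral.integral_eq_sub_of_hasDerivAt hderiv
    (hcont.intervalIntegrable)
  rw [hint]
  have hF1 : F 1 = c * (Real.log a - Real.log b) - d * a⁻¹ := by
    simp [hF]
  have hF0 : F 0 = - d := by
    simp [hF]
  rw [hF1, hF0]
  have hlog : Real.log a - Real.log b = 2 * Real.log (1 + 1/n) := by
    rw [← Real.log_div hane hbpos.ne']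
    have hdiv : a / b = (1 + 1/n)^2 := by
      rw [hba]; field_simp; ring
    rw [hdiv, Real.log_pow]
    norm_num
  rw [hlog]
  have hbs : b - a = -(a * (1+2*n) / (1+n)^2) := by
    rw [hba]; field_simp; ring
  have e1 : b^2 * c = n^4/(1+2*n)^2 := by
    rw [hc, hbs, hba]
    field_simp
  have e2 : b^2 * (d * a⁻¹ - d) = n ^ 4 / ((1 + n) ^ 2 * (1 + 2 * n)) := by
    rw [hd, hbs, hba]
    field_simp
    ring
  calc b^2 * (c * (2 * Real.log (1 + 1/n)) - d * a⁻¹ - -d)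
      = (b^2 * c) * (2 * Real.log (1 + 1/n)) - b^2 * (d * a⁻¹ - d) := by ring
    _ = (2 * n ^ 4 / (1 + 2 * n) ^ 2) * Real.log (1 + 1 / n) -
        n ^ 4 / ((1 + n) ^ 2 * (1 + 2 * n)) := by rw [e1, e2]; ring
end

section
/- Let n̄ > 0 be a real number and define t_k = n̄^k/(1+n̄)^{k+1} for k ∈ ℕ. Then ∑_{k=2}^∞ k·(k−1)·t_k² · ∫₀¹ (s·t_k + (1−s))⁻¹·(s·t_{k−2} + (1−s))⁻¹ ds = (4n̄⁴/(1+2n̄))·log(1 + 1/n̄), where log is the natural logarithm. -/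
lemma bpsk_pos_aux {c s : ℝ} (hc : 0 < c) (hs0 : 0 ≤ s) (hs1 : s ≤ 1) :
    0 < s * c + (1 - s) := by
  rcases lt_or_ge s 1 with h | h
  · nlinarith
  · have : s = 1 := le_antisymm hs1 h
    subst this; simpa using hc

lemma bpsk_integral_aux {a b : ℝ} (ha0 : 0 < a) (hb1 : b < 1) (hab : a < b) :
    ∫ s in (0:ℝ)..1, (s * a + (1 - s))⁻¹ * (s * b + (1 - s))⁻¹
      = (Real.log b - Real.log a) / (b - a) := by
  have hb0 : 0 < b := lt_trans ha0 hab
  have ha1 : a < 1 := lt_trans hab hb1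
  have hba : b - a ≠ 0 := sub_ne_zero.mpr (ne_of_gt hab)
  set F : ℝ → ℝ := fun y ↦ (b - a)⁻¹ *
    (Real.log (1 - (1 - b) * y) - Real.log (1 - (1 - a) * y)) with hF
  have hne : ∀ c : ℝ, 0 < c → ∀ s ∈ Set.uIcc (0:ℝ) 1, (1 : ℝ) - (1 - c) * s ≠ 0 := by
    intro c hc s hs
    rw [Set.uIcc_of_le (by norm_num : (0:ℝ) ≤ 1)] at hs
    have := bpsk_pos_aux hc hs.1 hs.2
    have e : s * c + (1 - s) = 1 - (1 - c) * s := by ring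
    rw [e] at this
    exact ne_of_gt this
  have hderiv : ∀ s ∈ Set.uIcc (0:ℝ) 1,
      HasDerivAt F ((s * a + (1 - s))⁻¹ * (s * b + (1 - s))⁻¹) s := by
    intro s hs
    have hnb := hne b hb0 s hs
    have hna := hne a ha0 s hs
    have h1 : HasDerivAt (fun y : ℝ ↦ 1 - (1 - b) * y) (-((1 - b) * 1)) s :=
      ((hasDerivAt_id s).const_mul (1 - b)).const_sub 1
    have h2 : HasDerivAt (fun y : ℝ ↦ 1 - (1 - a) * y) (-((1 - a) * 1)) s :=
      ((hasDerivAt_id s).const_mul (1 - a)).const_sub 1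
    have hd : HasDerivAt F ((b - a)⁻¹ *
        ((-((1 - b) * 1)) / (1 - (1 - b) * s) - (-((1 - a) * 1)) / (1 - (1 - a) * s))) s :=
      ((h1.log hnb).sub (h2.log hna)).const_mul _
    convert hd using 1
    have e1 : s * a + (1 - s) = 1 - (1 - a) * s := by ring
    have e2 : s * b + (1 - s) = 1 - (1 - b) * s := by ring
    rw [e1, e2]
    rw [div_sub_div _ _ hnb hna]
    field_simp
    ring
  have hint : IntervalIntegrable
      (fun s : ℝ ↦ (s * a + (1 - s))⁻¹ * (s * b + (1 - s))⁻¹) MeasureTheory.volume 0 1 := by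
    apply ContinuousOn.intervalIntegrable
    apply ContinuousOn.mul
    · apply ContinuousOn.inv₀ (by fun_prop)
      intro s hs
      rw [Set.uIcc_of_le (by norm_num : (0:ℝ) ≤ 1)] at hs
      exact ne_of_gt (bpsk_pos_aux ha0 hs.1 hs.2)
    · apply ContinuousOn.inv₀ (by fun_prop)
      intro s hs
      rw [Set.uIcc_of_le (by norm_num : (0:ℝ) ≤ 1)] at hs
      exact ne_of_gt (bpsk_pos_aux hb0 hs.1 hs.2)
  rw [intervalIntegral.integral_eq_sub_of_hasDerivAt hderiv hint]
  have e1 : (1 : ℝ) - (1 - b) * 1 = b := by ring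
  have e2 : (1 : ℝ) - (1 - a) * 1 = a := by ring
  simp only [hF, e1, e2, mul_zero, sub_zero, Real.log_one]
  field_simp

/-- Scalar content of `Tr[â² ρ̂₀ ∫₀¹ ds σ̂₀⁻¹(s) ρ̂₀ (â†)² σ̂₀⁻¹(s)]`:
`∑_{k=2}^∞ k(k−1) t_k² ∫₀¹ (s t_k + (1−s))⁻¹ (s t_{k−2} + (1−s))⁻¹ ds
  = (4n̄⁴/(1+2n̄)) log(1+1/n̄)` (the `k = 0, 1` terms vanish since `k(k−1) = 0`). -/
theorem bpsk_trace_series_one (n : ℝ) (hn : 0 < n)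
    (t : ℕ → ℝ) (ht : ∀ k, t k = n ^ k / (1 + n) ^ (k + 1)) :
    ∑' k : ℕ, (k : ℝ) * ((k : ℝ) - 1) * t k ^ 2 *
        ∫ s in (0:ℝ)..1, (s * t k + (1 - s))⁻¹ * (s * t (k - 2) + (1 - s))⁻¹ =
      (4 * n ^ 4 / (1 + 2 * n)) * Real.log (1 + 1 / n) := by
  have hn0 : (0:ℝ) < 1 + n := by linarith
  have hnn : n ≠ 0 := ne_of_gt hn
  have h1n : (1:ℝ) + n ≠ 0 := ne_of_gt hn0
  have h2n : (1:ℝ) + 2 * n ≠ 0 := by positivity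
  set L := Real.log (1 + 1 / n) with hL
  set x := n / (1 + n) with hx
  have hx0 : 0 < x := div_pos hn hn0
  have hx1 : x < 1 := (div_lt_one hn0).2 (by linarith)
  have hxn : ‖x‖ < 1 := by rw [Real.norm_eq_abs, abs_of_pos hx0]; exact hx1
  set c : ℝ := 4 * n * L / (1 + 2 * n) * x ^ 3 with hc
  set f : ℕ → ℝ := fun k ↦ (k : ℝ) * ((k : ℝ) - 1) * t k ^ 2 *
      ∫ s in (0:ℝ)..1, (s * t k + (1 - s))⁻¹ * (s * t (k - 2) + (1 - s))⁻¹ with hf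
  have htpos : ∀ k, 0 < t k := by intro k; rw [ht]; positivity
  have htlt1 : ∀ k, t k < 1 := by
    intro k
    rw [ht k, div_lt_one (by positivity)]
    have h1 : (1+n)^(k+1) = (1+n)^k * (1+n) := pow_succ _ _
    nlinarith [pow_pos hn0 k, pow_le_pow_left₀ hn.le (by linarith : n ≤ 1+n) k]
  have hLlog : L = Real.log (1 + n) - Real.log n := by
    have e : (1:ℝ) + 1/n = (1+n)/n := by field_simp; ring
    rw [hL, e, Real.log_div h1n hnn]
  have key : ∀ m : ℕ, f (m + 2) = c * (((m + 2).choose 2 : ℝ) * x ^ m) := by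
    intro m
    have hmm : m + 2 - 2 = m := rfl
    have hab : t (m + 2) < t m := by
      rw [ht, ht]
      rw [div_lt_div_iff₀ (by positivity) (by positivity)]
      calc n ^ (m+2) * (1+n)^(m+1) = (n^m * (1+n)^(m+1)) * n^2 := by ring
        _ < (n^m * (1+n)^(m+1)) * (1+n)^2 := by
            apply mul_lt_mul_of_pos_left _ (by positivity)
            nlinarith
        _ = n ^ m * (1+n)^(m+3) := by ring
    have hba : t m - t (m + 2) ≠ 0 := sub_ne_zero.mpr (ne_of_gt hab)
    have hlog2 : Real.log (t m) - Real.log (t (m + 2)) = 2 * L := by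
      rw [ht, ht, Real.log_div (by positivity) (by positivity),
        Real.log_div (by positivity) (by positivity),
        Real.log_pow, Real.log_pow, Real.log_pow, Real.log_pow, hLlog]
      push_cast
      ring
    have hch : (((m + 2).choose 2 : ℕ) : ℝ) * 2 = ((m:ℝ) + 2) * ((m:ℝ) + 1) := by
      have he : 2 ∣ (m + 2) * (m + 1) := by
        have := (Nat.even_mul_succ_self (m + 1)).two_dvd
        simpa [mul_comm] using this
      have h2 : (m + 2).choose 2 * 2 = (m + 2) * (m + 1) := by
        rw [Nat.choose_two_right]
        show (m + 2) * (m + 1) / 2 * 2 = (m + 2) * (m + 1)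
        exact Nat.div_mul_cancel he
      exact_mod_cast congrArg (Nat.cast : ℕ → ℝ) h2
    show ((m + 2 : ℕ) : ℝ) * (((m + 2 : ℕ) : ℝ) - 1) * t (m + 2) ^ 2 *
        (∫ s in (0:ℝ)..1, (s * t (m + 2) + (1 - s))⁻¹ * (s * t (m + 2 - 2) + (1 - s))⁻¹)
        = c * (((m + 2).choose 2 : ℝ) * x ^ m)
    have hch' : (((m + 2).choose 2 : ℕ) : ℝ) = ((m:ℝ) + 2) * ((m:ℝ) + 1) / 2 := by
      rw [eq_div_iff (two_ne_zero)]; exact hch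
    have hD : t m - t (m + 2) = n ^ m * (1 + 2 * n) / (1 + n) ^ (m + 3) := by
      rw [ht, ht, div_sub_div _ _ (pow_ne_zero _ h1n) (pow_ne_zero _ h1n),
        div_eq_div_iff (by positivity) (by positivity)]
      ring
    rw [hmm, bpsk_integral_aux (htpos (m + 2)) (htlt1 m) hab, hlog2, hch', hD, hc, hx]
    rw [ht]
    push_cast
    simp only [div_pow]
    field_simp
    ring
  have hgeo := hasSum_choose_mul_geometric_of_norm_lt_one 2 hxn
  have h2 : HasSum (fun m ↦ f (m + 2)) (c * (1 / (1 - x) ^ 3)) := by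
    simpa only [key] using hgeo.mul_left c
  have h3 := (hasSum_nat_add_iff (f := f) 2).mp h2
  have hsum0 : ∑ i ∈ Finset.range 2, f i = 0 := by
    simp [hf, Finset.sum_range_succ]
  rw [hsum0, add_zero] at h3
  rw [show (∑' k : ℕ, (k : ℝ) * ((k : ℝ) - 1) * t k ^ 2 *
        ∫ s in (0:ℝ)..1, (s * t k + (1 - s))⁻¹ * (s * t (k - 2) + (1 - s))⁻¹) = ∑' k, f k from rfl,
     h3.tsum_eq, hc, hx]
  have hx1' : (1:ℝ) - n / (1 + n) = 1 / (1 + n) := by field_simp; ring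
  rw [hx1']
  field_simp
end

section
/- Let n̄ > 0 be a real number and define t_k = n̄^k/(1+n̄)^{k+1} for k ∈ ℕ. Then ∑_{k=0}^∞ (k+1)·(k+2)·t_k·t_{k+2}² · ∫₀¹ s·(s·t_k + (1−s))⁻²·(s·t_{k+2} + (1−s))⁻¹ ds = (4n̄⁴·(1+n̄)²/(1+2n̄)²)·log(1 + 1/n̄) − 2n̄⁴/(1+2n̄), where log is the natural logarithm. -/
lemma integral_eval {a b : ℝ} (ha : 0 < a) (ha1 : a < 1) (hb : 0 < b) (hba : b < a) :
    ∫ s in (0:ℝ)..1, s * ((s * a + (1 - s)) ^ 2)⁻¹ * (s * b + (1 - s))⁻¹ =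
      Real.log (a / b) / (a - b) ^ 2 - 1 / ((a - b) * a) := by
  have hb1 : b < 1 := hba.trans ha1
  have hDa : ∀ s ∈ Set.uIcc (0:ℝ) 1, 0 < s * a + (1 - s) := by
    intro s hs
    rw [Set.uIcc_of_le (by norm_num)] at hs
    obtain ⟨h0, h1⟩ := hs
    nlinarith
  have hDb : ∀ s ∈ Set.uIcc (0:ℝ) 1, 0 < s * b + (1 - s) := by
    intro s hs
    rw [Set.uIcc_of_le (by norm_num)] at hs
    obtain ⟨h0, h1⟩ := hs
    nlinarith
  have hab : a - b ≠ 0 := by linarith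
  have hba' : b - a ≠ 0 := by linarith
  have h1a : (1:ℝ) - a ≠ 0 := by linarith
  set F : ℝ → ℝ := fun s =>
    Real.log (s * a + (1 - s)) * ((a - b) ^ 2)⁻¹
      + ((b - a) * (1 - a))⁻¹ * (s * a + (1 - s))⁻¹
      - Real.log (s * b + (1 - s)) * ((a - b) ^ 2)⁻¹ with hF
  have key : ∀ s ∈ Set.uIcc (0:ℝ) 1,
      HasDerivAt F (s * ((s * a + (1 - s)) ^ 2)⁻¹ * (s * b + (1 - s))⁻¹) s := by
    intro s hs
    have hDa' := (hDa s hs).ne'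
    have hDb' := (hDb s hs).ne'
    have hda : HasDerivAt (fun s : ℝ => s * a + (1 - s)) (a - 1) s := by
      have := ((hasDerivAt_id s).mul_const a).add ((hasDerivAt_id s).const_sub 1)
      exact this.congr_deriv (by ring)
    have hdb : HasDerivAt (fun s : ℝ => s * b + (1 - s)) (b - 1) s := by
      have := ((hasDerivAt_id s).mul_const b).add ((hasDerivAt_id s).const_sub 1)
      exact this.congr_deriv (by ring)
    have H := (((hda.log hDa').mul_const (((a - b) ^ 2)⁻¹)).add
        (((hda.inv hDa').const_mul (((b - a) * (1 - a))⁻¹)))).sub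
        ((hdb.log hDb').mul_const (((a - b) ^ 2)⁻¹))
    refine H.congr_deriv ?_
    have hD : (s * a + (1 - s)) = 1 + (a - 1) * s := by ring
    have hE : (s * b + (1 - s)) = 1 + (b - 1) * s := by ring
    rw [hD, hE] at *
    field_simp
    have hE' : 1 + s * (b - 1) ≠ 0 := ne_of_gt (by have := hDb s hs; linarith)
    have hD' : 1 + (a - 1) * s ≠ 0 := ne_of_gt (by have := hDa s hs; linarith)
    field_simp
    ring
  have hcont : ContinuousOn
      (fun s => s * ((s * a + (1 - s)) ^ 2)⁻¹ * (s * b + (1 - s))⁻¹) (Set.uIcc (0:ℝ) 1) := by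
    apply ContinuousOn.mul
    · apply ContinuousOn.mul continuousOn_id
      exact ((((continuous_id.mul continuous_const).add
        (continuous_const.sub continuous_id)).pow 2).continuousOn).inv₀
        (fun s hs => pow_ne_zero 2 (hDa s hs).ne')
    · exact (((continuous_id.mul continuous_const).add
        (continuous_const.sub continuous_id)).continuousOn).inv₀
        (fun s hs => (hDb s hs).ne')
  rw [intervalIntegral.integral_eq_sub_of_hasDerivAt key (hcont.intervalIntegrable)]
  simp only [hF]
  rw [Real.log_div ha.ne' hb.ne']
  norm_num
  field_simp
  ring

/-- Scalar content of `Tr[ρ̂₀ ∫₀¹ s ds σ̂₀⁻¹(s) â² ρ̂₀ σ̂₀⁻¹(s) ρ̂₀ (â†)² σ̂₀⁻¹(s)]`: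
`∑_k (k+1)(k+2) t_k t_{k+2}² ∫₀¹ s (s t_k + (1−s))⁻² (s t_{k+2} + (1−s))⁻¹ ds
  = (4n̄⁴(1+n̄)²/(1+2n̄)²) log(1+1/n̄) − 2n̄⁴/(1+2n̄)`. -/
theorem bpsk_trace_series_two (n : ℝ) (hn : 0 < n)
    (t : ℕ → ℝ) (ht : ∀ k, t k = n ^ k / (1 + n) ^ (k + 1)) :
    ∑' k : ℕ, ((k : ℝ) + 1) * ((k : ℝ) + 2) * t k * t (k + 2) ^ 2 *
        ∫ s in (0:ℝ)..1, s * ((s * t k + (1 - s)) ^ 2)⁻¹ * (s * t (k + 2) + (1 - s))⁻¹ =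
      (4 * n ^ 4 * (1 + n) ^ 2 / (1 + 2 * n) ^ 2) * Real.log (1 + 1 / n) -
        2 * n ^ 4 / (1 + 2 * n) := by
  have hn1 : (0:ℝ) < 1 + n := by linarith
  set x : ℝ := n / (1 + n) with hxdef
  have hx0 : 0 < x := div_pos hn hn1
  have hx1 : x < 1 := (div_lt_one hn1).mpr (by linarith)
  have hxn : ‖x‖ < 1 := by rw [Real.norm_eq_abs, abs_of_pos hx0]; exact hx1
  have hx2 : (1:ℝ) - x ^ 2 ≠ 0 := by nlinarith
  have htx : ∀ k, t k = x ^ k / (1 + n) := by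
    intro k
    rw [ht, hxdef, div_pow, pow_succ, div_div]
  have htpos : ∀ k, 0 < t k := by
    intro k
    rw [htx]; positivity
  have htlt1 : ∀ k, t k < 1 := by
    intro k
    rw [htx, div_lt_one hn1]
    calc x ^ k ≤ 1 := pow_le_one₀ hx0.le hx1.le
      _ < 1 + n := by linarith
  have htlt : ∀ k, t (k + 2) < t k := by
    intro k
    have hy0 : 0 < x ^ k := pow_pos hx0 k
    have hxx : x ^ (k + 2) = x ^ k * x ^ 2 := by ring
    have h2 : 0 < 1 - x ^ 2 := by nlinarith
    have hlt : x ^ (k + 2) < x ^ k := by nlinarith [mul_pos hy0 h2]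
    rw [htx, htx]
    exact (div_lt_div_iff_of_pos_right hn1).mpr hlt
  set L : ℝ := Real.log (1 + 1 / n) with hL
  set c : ℝ := 2 * x ^ 4 * (2 * L / (1 - x ^ 2) ^ 2 - 1 / (1 - x ^ 2)) / (1 + n) with hc
  have hsum : HasSum (fun m : ℕ => (((m + 2).choose 2 : ℕ) : ℝ) * x ^ m * c)
      (1 / (1 - x) ^ 3 * c) :=
    (hasSum_choose_mul_geometric_of_norm_lt_one 2 hxn).mul_right c
  have hterm : ∀ k : ℕ, ((k : ℝ) + 1) * ((k : ℝ) + 2) * t k * t (k + 2) ^ 2 *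
        ∫ s in (0:ℝ)..1, s * ((s * t k + (1 - s)) ^ 2)⁻¹ * (s * t (k + 2) + (1 - s))⁻¹
      = (((k + 2).choose 2 : ℕ) : ℝ) * x ^ k * c := by
    intro k
    have hy0 : 0 < x ^ k := pow_pos hx0 k
    have hxx : x ^ (k + 2) = x ^ k * x ^ 2 := by ring
    rw [integral_eval (htpos k) (htlt1 k) (htpos (k + 2)) (htlt k)]
    have hdivlog : Real.log (t k / t (k + 2)) = 2 * L := by
      have hdiv : t k / t (k + 2) = (1 + 1 / n) ^ 2 := by
        rw [htx, htx, hxx, div_div_div_comm, div_self hn1.ne', hxdef]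
        field_simp
        ring
      rw [hdiv, Real.log_pow, hL]
      push_cast; ring
    have hcast : (((k + 2).choose 2 : ℕ) : ℝ) = ((k : ℝ) + 1) * ((k : ℝ) + 2) / 2 := by
      rw [Nat.cast_choose_two]
      push_cast; ring
    rw [hdivlog, hcast, htx, htx, hxx, hc]
    have hdiff : x ^ k * x ^ 2 / (1 + n) - x ^ k / (1 + n)
        = -(x ^ k * (1 - x ^ 2)) / (1 + n) := by ring
    rw [show x ^ k / (1 + n) - x ^ k * x ^ 2 / (1 + n)
        = x ^ k * (1 - x ^ 2) / (1 + n) from by ring]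
    field_simp
  rw [tsum_congr hterm, hsum.tsum_eq]
  have h1x : (1:ℝ) - x = 1 / (1 + n) := by
    rw [hxdef]; field_simp; ring
  have e1 : (1:ℝ) - x ^ 2 = (1 + 2 * n) / (1 + n) ^ 2 := by
    rw [hxdef]; field_simp; ring
  have h12 : (1:ℝ) + 2 * n ≠ 0 := by linarith
  rw [hc, e1, h1x, hxdef]
  field_simp
  ring
end
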